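/- For every integer d, let B(d) be the 3×3 matrix with rows ((3d-1)d(4-3d), d^2, 1), (-(3d-2)(3d-1)d, d^2, 0), and ((3d-3)(3d-2)(3d-1), (3d-3)(7d+2), (3d-3)(3d-2)). Then det B(d) = 6 d (d-1)(3d-1)(3d-2)(d^2 - 4d - 1), and det B(d) ≠ 0 for every integer d ≥ 2. -/
import Mathlib


open Matrix

/-- The 3×3 matrix of equations 1133, 1134 and 3344. -/
def B3 (d : ℤ) : Matrix (Fin 3) (Fin 3) ℤ :=
  !![(3*d-1)*d*(4-3*d), d^2, 1;
     -((3*d-2)*(3*d-1)*d), d^2, 0;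
     (3*d-3)*(3*d-2)*(3*d-1), (3*d-3)*(7*d+2), (3*d-3)*(3*d-2)]

/-- `det B(d) = 6 d (d-1)(3d-1)(3d-2)(d²-4d-1)`, which is nonzero for every
integer `d ≥ 2`. -/
theorem det_B3 :
    (∀ d : ℤ, (B3 d).det = 6 * d * (d-1) * (3*d-1) * (3*d-2) * (d^2 - 4*d - 1)) ∧
      ∀ d : ℤ, 2 ≤ d → (B3 d).det ≠ 0 := by
  have hdet : ∀ d : ℤ, (B3 d).det = 6 * d * (d-1) * (3*d-1) * (3*d-2) * (d^2 - 4*d - 1) := by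
    intro d
    simp [B3, Matrix.det_fin_three]
    ring
  refine ⟨hdet, fun d hd => ?_⟩
  rw [hdet]
  have h1 : (0:ℤ) < d := by linarith
  have h2 : (0:ℤ) < d - 1 := by linarith
  have h3 : (0:ℤ) < 3*d - 1 := by linarith
  have h4 : (0:ℤ) < 3*d - 2 := by linarith
  have h5 : d^2 - 4*d - 1 ≠ 0 := by
    rcases le_or_gt d 4 with h | h
    · interval_cases d <;> decide
    · nlinarith
  positivity
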